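/- Let C ⊆ ℕ be infinite and cohesive, meaning that for every computably enumerable set W ⊆ ℕ, at least one of C ∩ W and C ∩ (ℕ \ W) is finite. Assume moreover that the complement ℕ \ C is not computably enumerable. Then C is Π⁰₁-immune: for every computably enumerable set W ⊆ ℕ, if ℕ \ W ⊆ C then ℕ \ W is finite. -/

import Mathlib

lemma finset_primrecPred (s : Finset ℕ) : PrimrecPred (· ∈ s) := by
  classical
  induction s using Finset.induction_on with
  | empty =>
    exact PrimrecPred.of_eq (p := fun _ : ℕ => False)
      (Primrec.primrecPred (Primrec.const false)) (by simp)
  | @insert a s ha ih =>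
    have hq : PrimrecPred fun x : ℕ => x = a ∨ x ∈ s :=
      (PrimrecPred.or (PrimrecRel.comp Primrec.eq Primrec.id (Primrec.const a)) ih)
    exact hq.of_eq fun x => by simp [Finset.mem_insert, eq_comm]

lemma rePred_and_not_finset {p : ℕ → Prop} (hp : REPred p) (s : Finset ℕ) :
    REPred fun x => p x ∧ x ∉ s := by
  classical
  have hq : ComputablePred fun x : ℕ => x ∉ s :=
    ⟨inferInstance, ((finset_primrecPred s).not).decide.to_comp⟩
  have hq' : REPred fun x : ℕ => x ∉ s := hq.to_re
  have := Partrec.dom_re <| hp.bind ((hq'.comp Computable.fst).to₂)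
  exact this.of_eq fun a => by simp [Part.assert]

/-- If `C` is infinite and cohesive (for every c.e. `W`, one of `C ∩ W`, `C ∩ Wᶜ` is
finite), and the complement of `C` is not c.e., then `C` is `Π⁰₁`-immune: every
co-c.e. subset of `C` is finite. -/
theorem cohesive_pi01_immune (C : Set ℕ) (hinf : C.Infinite)
    (hcoh : ∀ W : Set ℕ, REPred (· ∈ W) → (C ∩ W).Finite ∨ (C ∩ Wᶜ).Finite)
    (hnotce : ¬ REPred (· ∈ Cᶜ)) :
    ∀ W : Set ℕ, REPred (· ∈ W) → Wᶜ ⊆ C → Wᶜ.Finite := by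
  intro W hW hWC
  rcases hcoh W hW with h | h
  · -- C ∩ W finite: then Cᶜ = W \ (C ∩ W) is c.e., contradiction
    exfalso
    apply hnotce
    have := rePred_and_not_finset hW h.toFinset
    refine this.of_eq fun x => ?_
    simp only [Set.Finite.mem_toFinset, Set.mem_inter_iff]
    constructor
    · rintro ⟨hxW, hx⟩
      intro hxC
      exact hx ⟨hxC, hxW⟩
    · intro hx
      have hxW : x ∈ W := by
        by_contra hxw
        exact hx (hWC hxw)
      exact ⟨hxW, fun ⟨hc, _⟩ => hx hc⟩
  · exact (h.subset fun x hx => ⟨hWC hx, hx⟩).subset fun x hx => hx
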